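/- ℓ_C → ∞ as C → +∞, where ℓ_C = ∫_1^{√(1+e^{2C})} du / √(2C − log(u² − 1)). -/

import Mathlib

open MeasureTheory intervalIntegral Real Filter

noncomputable def ell (C : ℝ) : ℝ :=
  ∫ u in (1 : ℝ)..Real.sqrt (1 + Real.exp (2 * C)),
    (Real.sqrt (2 * C - Real.log (u ^ 2 - 1)))⁻¹

private lemma ell_aux_meas (C : ℝ) :
    Measurable fun u : ℝ => (Real.sqrt (2 * C - Real.log (u ^ 2 - 1)))⁻¹ := by
  apply Measurable.inv
  apply Real.continuous_sqrt.measurable.comp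
  exact measurable_const.sub (Real.measurable_log.comp
    ((measurable_id.pow_const 2).sub measurable_const))

/-- Key pointwise lower bound: `2C - log(u²-1) ≥ 2(B-u)e^{-2C}` on `(1, B]`. -/
private lemma ell_aux_key (C : ℝ) (hC : 1 ≤ C) {u : ℝ}
    (hu1 : 1 < u) (hu2 : u ≤ Real.sqrt (1 + Real.exp (2 * C))) :
    2 * (Real.sqrt (1 + Real.exp (2 * C)) - u) * Real.exp (-(2 * C)) ≤
      2 * C - Real.log (u ^ 2 - 1) := by
  set B := Real.sqrt (1 + Real.exp (2 * C)) with hB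
  have hB2 : B ^ 2 = 1 + Real.exp (2 * C) := Real.sq_sqrt (by positivity)
  have ht0 : 0 < u ^ 2 - 1 := by nlinarith
  have hlog : Real.log ((u ^ 2 - 1) * Real.exp (-(2 * C))) ≤
      (u ^ 2 - 1) * Real.exp (-(2 * C)) - 1 :=
    Real.log_le_sub_one_of_pos (by positivity)
  rw [Real.log_mul (ne_of_gt ht0) (Real.exp_ne_zero _), Real.log_exp] at hlog
  have h1 : 1 - (u ^ 2 - 1) * Real.exp (-(2 * C)) ≤ 2 * C - Real.log (u ^ 2 - 1) := by
    linarith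
  have hee : Real.exp (2 * C) * Real.exp (-(2 * C)) = 1 := by
    rw [← Real.exp_add]; simp
  have h2 : 1 - (u ^ 2 - 1) * Real.exp (-(2 * C)) =
      (B ^ 2 - u ^ 2) * Real.exp (-(2 * C)) := by
    rw [hB2]; linear_combination -hee
  have hBu : 2 ≤ B + u := by
    have h1B : 1 ≤ B := le_trans (le_of_lt hu1) hu2
    linarith
  have hexp : (0:ℝ) < Real.exp (-(2 * C)) := Real.exp_pos _
  have hBum : 0 ≤ B - u := by linarith
  nlinarith [mul_le_mul_of_nonneg_right (mul_le_mul_of_nonneg_left hBu hBum) hexp.le]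

/-- Integrability of the integrand of `ell`. -/
private lemma ell_aux_integrable (C : ℝ) (hC : 1 ≤ C) :
    IntervalIntegrable (fun u : ℝ => (Real.sqrt (2 * C - Real.log (u ^ 2 - 1)))⁻¹)
      volume 1 (Real.sqrt (1 + Real.exp (2 * C))) := by
  set B := Real.sqrt (1 + Real.exp (2 * C)) with hB
  have hB2 : B ^ 2 = 1 + Real.exp (2 * C) := Real.sq_sqrt (by positivity)
  have h1B : (1:ℝ) ≤ B :=
    (Real.le_sqrt (by norm_num) (by positivity)).2
      (by nlinarith [(Real.exp_pos (2 * C)).le])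
  set g : ℝ → ℝ := fun u =>
    (2 * Real.exp (-(2 * C))) ^ (-(1/2) : ℝ) * (B - u) ^ (-(1/2) : ℝ) with hg
  have hgi : IntervalIntegrable g volume 1 B := by
    have h0 : IntervalIntegrable (fun x : ℝ => x ^ (-(1/2) : ℝ)) volume (B - 1) (B - B) :=
      intervalIntegral.intervalIntegrable_rpow' (by norm_num)
    have h1 : IntervalIntegrable (fun u : ℝ => (B - u) ^ (-(1/2) : ℝ)) volume
        (B - (B - 1)) (B - (B - B)) := h0.comp_sub_left B
    simp only [sub_sub_cancel, sub_self, sub_zero] at h1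
    exact h1.const_mul _
  apply hgi.mono_fun ((ell_aux_meas C).aestronglyMeasurable)
  rw [Set.uIoc_of_le h1B]
  filter_upwards [ae_restrict_mem measurableSet_Ioc] with u hu
  obtain ⟨hu1, hu2⟩ := hu
  have hkey := ell_aux_key C hC hu1 hu2
  have hBu : (0:ℝ) ≤ B - u := by linarith
  have hgnn : 0 ≤ g u := by
    rw [hg]
    have := Real.rpow_nonneg (by positivity : (0:ℝ) ≤ 2 * Real.exp (-(2 * C))) (-(1/2) : ℝ)
    have := Real.rpow_nonneg hBu (-(1/2) : ℝ)
    positivity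
  rcases eq_or_lt_of_le hBu with heq | hlt
  · -- u = B : lhs is 0
    have huB : u = B := by linarith
    have hx : u ^ 2 - 1 = Real.exp (2 * C) := by rw [huB]; linarith
    rw [Real.norm_eq_abs, Real.norm_eq_abs, hx, Real.log_exp, sub_self, Real.sqrt_zero,
      inv_zero, abs_zero]
    exact abs_nonneg _
  · -- u < B
    have hY : 0 < 2 * (B - u) * Real.exp (-(2 * C)) := by positivity
    have hsq : Real.sqrt (2 * (B - u) * Real.exp (-(2 * C))) ≤
        Real.sqrt (2 * C - Real.log (u ^ 2 - 1)) := Real.sqrt_le_sqrt hkey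
    have hsp : 0 < Real.sqrt (2 * (B - u) * Real.exp (-(2 * C))) := Real.sqrt_pos.2 hY
    have hle : (Real.sqrt (2 * C - Real.log (u ^ 2 - 1)))⁻¹ ≤
        (Real.sqrt (2 * (B - u) * Real.exp (-(2 * C))))⁻¹ :=
      inv_anti₀ hsp hsq
    have hrw : (Real.sqrt (2 * (B - u) * Real.exp (-(2 * C))))⁻¹ = g u := by
      have h2e : (0:ℝ) ≤ 2 * Real.exp (-(2 * C)) := by positivity
      simp only [hg]
      rw [show 2 * (B - u) * Real.exp (-(2 * C)) = (2 * Real.exp (-(2 * C))) * (B - u) by ring,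
        Real.sqrt_eq_rpow, Real.mul_rpow h2e hBu, mul_inv,
        ← Real.rpow_neg h2e, ← Real.rpow_neg hBu]
    rw [Real.norm_eq_abs, Real.norm_eq_abs,
      abs_of_nonneg (by positivity : (0:ℝ) ≤ (Real.sqrt (2 * C - Real.log (u ^ 2 - 1)))⁻¹),
      abs_of_nonneg hgnn]
    calc (Real.sqrt (2 * C - Real.log (u ^ 2 - 1)))⁻¹
        ≤ (Real.sqrt (2 * (B - u) * Real.exp (-(2 * C))))⁻¹ := hle
      _ = g u := hrw

/-- Lower bound on `ell C` for `C ≥ 3`. -/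
private lemma ell_aux_lower (C : ℝ) (hC : 3 ≤ C) : Real.exp C / (8 * C) ≤ ell C := by
  have hC1 : (1:ℝ) ≤ C := by linarith
  set B := Real.sqrt (1 + Real.exp (2 * C)) with hB
  set B' := Real.sqrt (1 + Real.exp (2 * C - 1)) with hB'
  have hB2 : B ^ 2 = 1 + Real.exp (2 * C) := Real.sq_sqrt (by positivity)
  have hB'2 : B' ^ 2 = 1 + Real.exp (2 * C - 1) := Real.sq_sqrt (by positivity)
  have h1B : (1:ℝ) ≤ B :=
    (Real.le_sqrt (by norm_num) (by positivity)).2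
      (by nlinarith [(Real.exp_pos (2 * C)).le])
  have hs2B' : Real.sqrt 2 ≤ B' := by
    rw [hB']
    exact Real.sqrt_le_sqrt (by linarith [Real.one_le_exp (by linarith : (0:ℝ) ≤ 2 * C - 1)])
  have hB'B : B' ≤ B := by
    rw [hB', hB]
    exact Real.sqrt_le_sqrt (by linarith [Real.exp_le_exp.2 (by linarith : 2 * C - 1 ≤ 2 * C)])
  have h1s2 : (1:ℝ) ≤ Real.sqrt 2 := by
    rw [show (1:ℝ) = Real.sqrt 1 by simp]
    exact Real.sqrt_le_sqrt (by norm_num)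
  set f : ℝ → ℝ := fun u => (Real.sqrt (2 * C - Real.log (u ^ 2 - 1)))⁻¹ with hf
  have hfnn : ∀ u, 0 ≤ f u := fun u => by positivity
  have hint : IntegrableOn f (Set.Ioc 1 B) volume := (ell_aux_integrable C hC1).1
  have hsub : Set.Ioc (Real.sqrt 2) B' ⊆ Set.Ioc 1 B := Set.Ioc_subset_Ioc h1s2 hB'B
  have hint' : IntegrableOn f (Set.Ioc (Real.sqrt 2) B') volume := hint.mono_set hsub
  -- pointwise bound on the inner interval
  have hpt : ∀ u ∈ Set.Ioc (Real.sqrt 2) B', (Real.sqrt (2 * C))⁻¹ ≤ f u := by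
    intro u hu
    obtain ⟨hu1, hu2⟩ := hu
    have hu2' : u ^ 2 ≤ 1 + Real.exp (2 * C - 1) := by
      rw [← hB'2]
      have h0u : 0 ≤ u := le_trans (by positivity) hu1.le
      nlinarith
    have hu1' : 2 < u ^ 2 := by
      nlinarith [Real.sq_sqrt (by norm_num : (0:ℝ) ≤ 2), Real.sqrt_nonneg 2]
    have hlog1 : 0 ≤ Real.log (u ^ 2 - 1) := Real.log_nonneg (by linarith)
    have hlog2 : Real.log (u ^ 2 - 1) ≤ 2 * C - 1 := by
      calc Real.log (u ^ 2 - 1) ≤ Real.log (Real.exp (2 * C - 1)) :=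
            Real.log_le_log (by linarith) (by linarith)
        _ = 2 * C - 1 := Real.log_exp _
    have hX1 : (1:ℝ) ≤ 2 * C - Real.log (u ^ 2 - 1) := by linarith
    have hsqle : Real.sqrt (2 * C - Real.log (u ^ 2 - 1)) ≤ Real.sqrt (2 * C) :=
      Real.sqrt_le_sqrt (by linarith)
    have hsp : 0 < Real.sqrt (2 * C - Real.log (u ^ 2 - 1)) :=
      Real.sqrt_pos.2 (by linarith)
    exact inv_anti₀ hsp hsqle
  -- chain of integral inequalities
  have hmeas : MeasurableSet (Set.Ioc (Real.sqrt 2) B') := measurableSet_Ioc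
  have hconst : (B' - Real.sqrt 2) * (Real.sqrt (2 * C))⁻¹ ≤
      ∫ u in Set.Ioc (Real.sqrt 2) B', f u := by
    have h1 : ∫ _ in Set.Ioc (Real.sqrt 2) B', (Real.sqrt (2 * C))⁻¹ ≤
        ∫ u in Set.Ioc (Real.sqrt 2) B', f u :=
      setIntegral_mono_on (integrableOn_const measure_Ioc_lt_top.ne) hint' hmeas hpt
    rwa [setIntegral_const, measureReal_def, Real.volume_Ioc, ENNReal.toReal_ofReal (by linarith), smul_eq_mul]
      at h1
  have hmono : ∫ u in Set.Ioc (Real.sqrt 2) B', f u ≤ ∫ u in Set.Ioc 1 B, f u :=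
    setIntegral_mono_set hint (Filter.Eventually.of_forall hfnn)
      hsub.eventuallyLE
  have hell : ell C = ∫ u in Set.Ioc 1 B, f u := by
    show (∫ u in (1:ℝ)..B, f u) = _
    rw [intervalIntegral.integral_of_le h1B]
  -- now numeric bounds
  have hexpC : Real.exp C ≤ 4 * (B' - Real.sqrt 2) := by
    have h1 : Real.exp (C - 1/2) ≤ B' := by
      have he : Real.exp (C - 1/2) = Real.sqrt (Real.exp (2 * C - 1)) := by
        rw [show 2 * C - 1 = (C - 1/2) + (C - 1/2) by ring, Real.exp_add,
          Real.sqrt_mul_self (Real.exp_pos _).le]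
      rw [hB', he]
      exact Real.sqrt_le_sqrt (by linarith)
    have hhalf : Real.exp (1/2 : ℝ) < 2 := by
      nlinarith [Real.exp_one_lt_d9, Real.exp_pos (1/2 : ℝ),
        (by rw [← Real.exp_add]; norm_num :
          Real.exp (1/2 : ℝ) * Real.exp (1/2 : ℝ) = Real.exp 1)]
    have h2 : Real.exp C / 2 ≤ Real.exp (C - 1/2) := by
      rw [Real.exp_sub, div_le_div_iff₀ (by norm_num) (Real.exp_pos _)]
      nlinarith [Real.exp_pos C]
    have hs2 : Real.sqrt 2 < (3/2 : ℝ) :=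
      (Real.sqrt_lt' (by norm_num)).2 (by norm_num)
    have hC3 : (19:ℝ) ≤ Real.exp C := by
      have : Real.exp 3 ≤ Real.exp C := Real.exp_le_exp.2 hC
      nlinarith [Real.exp_one_gt_d9,
        (by rw [← Real.exp_add, ← Real.exp_add]; norm_num :
          Real.exp 1 * Real.exp 1 * Real.exp 1 = Real.exp 3)]
    linarith
  have hsqC : Real.sqrt (2 * C) ≤ 2 * C := by
    rw [Real.sqrt_le_left (by linarith)]
    nlinarith
  have hsqCpos : 0 < Real.sqrt (2 * C) := Real.sqrt_pos.2 (by linarith)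
  have hfinal : Real.exp C / (8 * C) ≤ (B' - Real.sqrt 2) * (Real.sqrt (2 * C))⁻¹ := by
    rw [div_le_iff₀ (by linarith : (0:ℝ) < 8 * C)]
    have h1 : Real.exp C / 4 ≤ B' - Real.sqrt 2 := by linarith
    have h2 : (Real.sqrt (2 * C))⁻¹ ≥ (2 * C)⁻¹ :=
      inv_anti₀ (by linarith) hsqC
    have h3 : (0:ℝ) ≤ (2 * C)⁻¹ := by positivity
    have h4 : (0:ℝ) ≤ B' - Real.sqrt 2 := by linarith [Real.exp_pos C]
    calc Real.exp C = (Real.exp C / 4) * (2 * C)⁻¹ * (8 * C) := by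
          field_simp
          ring
      _ ≤ (B' - Real.sqrt 2) * (Real.sqrt (2 * C))⁻¹ * (8 * C) :=
          mul_le_mul_of_nonneg_right (mul_le_mul h1 h2 h3 h4) (by linarith)
  rw [hell]
  calc Real.exp C / (8 * C) ≤ (B' - Real.sqrt 2) * (Real.sqrt (2 * C))⁻¹ := hfinal
    _ ≤ ∫ u in Set.Ioc (Real.sqrt 2) B', f u := hconst
    _ ≤ ∫ u in Set.Ioc 1 B, f u := hmono

theorem ell_tendsto_atTop :
    Filter.Tendsto ell Filter.atTop Filter.atTop := by
  have h1 : Tendsto (fun C : ℝ => Real.exp C / (8 * C)) atTop atTop := by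
    have h := (Real.tendsto_exp_div_pow_atTop 1).atTop_div_const (by norm_num : (0:ℝ) < 8)
    refine h.congr fun x => ?_
    rw [pow_one]; ring
  exact tendsto_atTop_mono' atTop
    (by filter_upwards [eventually_ge_atTop (3:ℝ)] with C hC using ell_aux_lower C hC) h1
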